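/- Let 0 ≤ l ≤ m, p ≥ 1, q ≥ m, T > 0 and n ≥ 3 an integer. Using the bound |Ψ(t)| ≤ 1.0253/(2π|t|) and 1 - 4χ_1 - 1/n > 1/4 for n ≥ 3 (where χ_1 := sup_{x>0} x^{-3}|cos(x)-1+x^2/2| ≈ 0.099), one has (1/T) ∫_l^m |Ψ(u/T)| u^p exp(-(u^2/2)(1 - (4χ_1/q)u - 1/n)) du ≤ (1.0253 · 2^{3p/2-2}/π) (Γ(p/2, l^2/8) - Γ(p/2, m^2/8)). -/

import Mathlib

open MeasureTheory Real Set intervalIntegral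

/-- Prawitz's kernel `Ψ(t) = ½(1-|t| + i[(1-|t|)cot(πt) + sign(t)/π])` for
`0 < |t| ≤ 1`, and `0` otherwise. -/
noncomputable def Psi (t : ℝ) : ℂ :=
  if 0 < |t| ∧ |t| ≤ 1 then
    (1 / 2 : ℂ) * (1 - |t| + Complex.I *
      ((1 - |t|) * Real.cot (π * t) + Real.sign t / π))
  else 0

/-- `χ₁ := sup_{x>0} x⁻³ |cos x - 1 + x²/2|`. -/
noncomputable def chi1 : ℝ :=
  ⨆ x : {x : ℝ // 0 < x}, |Real.cos x - 1 + (x : ℝ) ^ 2 / 2| / (x : ℝ) ^ 3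

/-- Upper incomplete Gamma function `Γ(a,x) = ∫_x^∞ u^{a-1} e^{-u} du`. -/
noncomputable def uGamma (a x : ℝ) : ℝ := ∫ u in Ioi x, u ^ (a - 1) * Real.exp (-u)

/- ### Auxiliary lemmas -/

lemma sin_aux_deriv (t : ℝ) : HasDerivAt (fun t : ℝ => Real.sin t - (t - t ^ 3 / 6))
    (Real.cos t - (1 - t ^ 2 / 2)) t := by
  have h2 : HasDerivAt (fun t : ℝ => t - t ^ 3 / 6) (1 - t ^ 2 / 2) t := by
    have := ((hasDerivAt_pow 3 t).div_const 6)
    have := (hasDerivAt_id t).sub this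
    exact this.congr_deriv (by norm_num [show (3:ℕ) - 1 = 2 from rfl]; ring)
  exact (Real.hasDerivAt_sin t).sub h2

lemma sub_cube_le_sin {x : ℝ} (hx : 0 ≤ x) : x - x ^ 3 / 6 ≤ Real.sin x := by
  have h : MonotoneOn (fun t : ℝ => Real.sin t - (t - t ^ 3 / 6)) (Ici 0) := by
    apply monotoneOn_of_deriv_nonneg (convex_Ici 0)
    · fun_prop
    · intro t ht
      exact (sin_aux_deriv t).differentiableAt.differentiableWithinAt
    · intro t ht
      rw [(sin_aux_deriv t).deriv]
      have := Real.one_sub_sq_div_two_le_cos (x := t)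
      linarith
  have := h (self_mem_Ici) hx hx
  simpa using this

lemma cos_aux_deriv (t : ℝ) : HasDerivAt (fun t : ℝ => (1 - t ^ 2 / 2 + t ^ 4 / 24) - Real.cos t)
    (Real.sin t - (t - t ^ 3 / 6)) t := by
  have h2 : HasDerivAt (fun t : ℝ => 1 - t ^ 2 / 2 + t ^ 4 / 24) (-t + t ^ 3 / 6) t := by
    have ha := ((hasDerivAt_pow 2 t).div_const 2)
    have hb := ((hasDerivAt_pow 4 t).div_const 24)
    have := ((hasDerivAt_const t (1:ℝ)).sub ha).add hb
    exact this.congr_deriv (by norm_num; ring)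
  have := h2.sub (Real.hasDerivAt_cos t)
  exact this.congr_deriv (by ring)

lemma cos_le_quartic {x : ℝ} (hx : 0 ≤ x) : Real.cos x ≤ 1 - x ^ 2 / 2 + x ^ 4 / 24 := by
  have h : MonotoneOn (fun t : ℝ => (1 - t ^ 2 / 2 + t ^ 4 / 24) - Real.cos t) (Ici 0) := by
    apply monotoneOn_of_deriv_nonneg (convex_Ici 0)
    · fun_prop
    · intro t ht
      exact (cos_aux_deriv t).differentiableAt.differentiableWithinAt
    · intro t ht
      rw [(cos_aux_deriv t).deriv]
      have ht0 : (0:ℝ) ≤ t := le_of_lt (by simpa using ht)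
      have := sub_cube_le_sin ht0
      linarith
  have := h (self_mem_Ici) hx hx
  simp at this
  linarith

lemma chi1_term_le {x : ℝ} (hx : 0 < x) :
    |Real.cos x - 1 + x ^ 2 / 2| / x ^ 3 ≤ 5 / 48 := by
  have hR0 : 0 ≤ Real.cos x - 1 + x ^ 2 / 2 := by
    have := Real.one_sub_sq_div_two_le_cos (x := x); linarith
  rw [abs_of_nonneg hR0, div_le_iff₀ (by positivity)]
  rcases le_or_gt x (5/2) with h1 | h1
  · have := cos_le_quartic hx.le
    nlinarith
  rcases le_or_gt (24/5) x with h2 | h2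
  · have := Real.cos_le_one x
    nlinarith
  · have hc : Real.cos x ≤ -1 + (x - π) ^ 2 / 2 := by
      have h := Real.one_sub_sq_div_two_le_cos (x := x - π)
      have hcs : Real.cos (x - π) = -Real.cos x := by
        rw [Real.cos_sub_pi]
      rw [hcs] at h
      linarith
    have hπl : (3.141592 : ℝ) < π := Real.pi_gt_d6
    have hπu : π < 3.15 := Real.pi_lt_d2
    nlinarith [sq_nonneg (x - 5/2), sq_nonneg (24/5 - x), mul_pos hx hx,
      mul_nonneg (mul_nonneg (sub_nonneg.2 h1.le) (sub_nonneg.2 h2.le)) hx.le,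
      mul_nonneg (sub_nonneg.2 h1.le) (sub_nonneg.2 h2.le)]

instance : Nonempty {x : ℝ // 0 < x} := ⟨⟨1, one_pos⟩⟩

lemma chi1_le : chi1 ≤ 5 / 48 := ciSup_le fun x => chi1_term_le x.2

lemma chi1_nonneg : 0 ≤ chi1 := by
  have hb : BddAbove (range fun x : {x : ℝ // 0 < x} =>
      |Real.cos x - 1 + (x : ℝ) ^ 2 / 2| / (x : ℝ) ^ 3) := by
    refine ⟨5/48, ?_⟩
    rintro y ⟨x, rfl⟩
    exact chi1_term_le x.2
  have := le_ciSup hb (⟨1, one_pos⟩ : {x : ℝ // 0 < x})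
  refine le_trans ?_ this
  positivity

lemma uGamma_int {a x : ℝ} (ha : 0 < a) (hx : 0 ≤ x) :
    IntegrableOn (fun u : ℝ => u ^ (a - 1) * Real.exp (-u)) (Ioi x) := by
  refine (((Real.GammaIntegral_convergent ha).mono_set (Ioi_subset_Ioi hx)).congr_fun
    (fun u hu => mul_comm _ _) measurableSet_Ioi)

lemma uGamma_sub {a x y : ℝ} (ha : 0 < a) (hx : 0 ≤ x) (hxy : x ≤ y) :
    uGamma a x - uGamma a y = ∫ v in Ioc x y, v ^ (a - 1) * Real.exp (-v) := by
  have h1 : uGamma a x = (∫ v in Ioc x y, v ^ (a - 1) * Real.exp (-v)) + uGamma a y := by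
    rw [uGamma, uGamma, ← Ioc_union_Ioi_eq_Ioi hxy,
      setIntegral_union (Ioc_disjoint_Ioi le_rfl) measurableSet_Ioi
        ((uGamma_int ha hx).mono_set Ioc_subset_Ioi_self)
        ((uGamma_int ha hx).mono_set (Ioi_subset_Ioi hxy))]
  linarith

lemma key_subst {p l m : ℝ} (hl : 0 ≤ l) (hlm : l ≤ m) (hp : 1 ≤ p) :
    uGamma (p / 2) (l ^ 2 / 8) - uGamma (p / 2) (m ^ 2 / 8)
      = 2 * (8 : ℝ) ^ (-(p / 2)) * ∫ u in Ioc l m, u ^ (p - 1) * Real.exp (-(u ^ 2 / 8)) := by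
  have ha : 0 < p / 2 := by linarith
  have hx : (0:ℝ) ≤ l ^ 2 / 8 := by positivity
  have hxy : l ^ 2 / 8 ≤ m ^ 2 / 8 := by nlinarith
  rw [uGamma_sub ha hx hxy]
  have himg : (fun u : ℝ => u ^ 2 / 8) '' Ioc l m = Ioc (l ^ 2 / 8) (m ^ 2 / 8) := by
    ext v
    constructor
    · rintro ⟨u, ⟨hu1, hu2⟩, rfl⟩
      exact ⟨by nlinarith, by nlinarith⟩
    · rintro ⟨hv1, hv2⟩
      have hv0 : 0 ≤ 8 * v := by nlinarith
      refine ⟨Real.sqrt (8 * v), ⟨?_, ?_⟩, ?_⟩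
      · rw [show l = Real.sqrt (l^2) from (Real.sqrt_sq hl).symm]
        exact Real.sqrt_lt_sqrt (by positivity) (by nlinarith)
      · rw [show m = Real.sqrt (m^2) from (Real.sqrt_sq (by linarith)).symm]
        exact Real.sqrt_le_sqrt (by nlinarith)
      · show Real.sqrt (8 * v) ^ 2 / 8 = v
        rw [Real.sq_sqrt hv0]; ring
  rw [← himg]
  rw [MeasureTheory.integral_image_eq_integral_abs_deriv_smul measurableSet_Ioc
    (f' := fun u => u / 4) ?_ ?_]
  · rw [← MeasureTheory.integral_const_mul]
    refine setIntegral_congr_fun measurableSet_Ioc fun u hu => ?_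
    have hu0 : 0 < u := lt_of_le_of_lt hl hu.1
    have h8 : (u ^ 2 / 8 : ℝ) ^ (p / 2 - 1) = u ^ (p - 2) / 8 ^ (p / 2 - 1) := by
      rw [Real.div_rpow (by positivity) (by norm_num), ← Real.rpow_natCast u 2,
        ← Real.rpow_mul hu0.le]
      congr 1
      push_cast; ring
    rw [smul_eq_mul, h8, abs_of_pos (by positivity : (0:ℝ) < u / 4)]
    have hu1 : u ^ (p - 2) = u ^ (p - 1) / u := by
      rw [show p - 2 = p - 1 - 1 by ring, Real.rpow_sub hu0, Real.rpow_one]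
    have h81 : (8:ℝ) ^ (p / 2 - 1) = 8 ^ (p/2) / 8 := by
      rw [Real.rpow_sub (by norm_num), Real.rpow_one]
    have h8ne : (0:ℝ) < (8:ℝ) ^ (p/2) := Real.rpow_pos_of_pos (by norm_num) _
    rw [hu1, h81, Real.rpow_neg (by norm_num : (0:ℝ) ≤ 8)]
    field_simp
    ring
  · intro u hu
    have : HasDerivAt (fun u : ℝ => u ^ 2 / 8) (u / 4) u := by
      have := (hasDerivAt_pow 2 u).div_const 8
      exact this.congr_deriv (by norm_num; ring)
    exact this.hasDerivWithinAt
  · intro u hu v hv h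
    have hu0 : 0 < u := lt_of_le_of_lt hl hu.1
    have hv0 : 0 < v := lt_of_le_of_lt hl hv.1
    nlinarith [h, sq_nonneg (u - v), sq_nonneg (u + v)]

lemma measurable_Psi : Measurable Psi := by
  have hsign : Measurable Real.sign := by
    unfold Real.sign
    refine Measurable.ite (measurableSet_lt measurable_id measurable_const) measurable_const
      (Measurable.ite (measurableSet_lt measurable_const measurable_id) measurable_const
        measurable_const)
  have hcot : Measurable fun t : ℝ => Real.cot (π * t) := by
    simp only [Real.cot_eq_cos_div_sin]
    exact (Real.measurable_cos.comp (measurable_const.mul measurable_id)).div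
      (Real.measurable_sin.comp (measurable_const.mul measurable_id))
  unfold Psi
  refine Measurable.ite ?_ ?_ measurable_const
  · exact (measurableSet_lt measurable_const measurable_id.abs).inter
      (measurableSet_le measurable_id.abs measurable_const)
  · have hA : Measurable fun t : ℝ => (1 - (|t| : ℝ) : ℂ) :=
      measurable_const.sub (Complex.measurable_ofReal.comp measurable_id.abs)
    have h2 : Measurable fun t : ℝ => ((Real.cot (π * t) : ℝ) : ℂ) :=
      Complex.measurable_ofReal.comp hcot
    have h3 : Measurable fun t : ℝ => ((Real.sign t : ℝ) : ℂ) :=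
      Complex.measurable_ofReal.comp hsign
    exact (hA.add (((hA.mul h2).add (h3.div_const _)).const_mul Complex.I)).const_mul _

/-- For `n ≥ 3`,
`T⁻¹ ∫_l^m |Ψ(u/T)| uᵖ exp(-(u²/2)(1 - (4χ₁/q)u - 1/n)) du
  ≤ (1.0253·2^{3p/2-2}/π)(Γ(p/2, l²/8) - Γ(p/2, m²/8))`. -/
theorem J3_bound (p l m q T : ℝ) (n : ℕ)
    (hl : 0 ≤ l) (hlm : l ≤ m) (hmq : m ≤ q) (hp : 1 ≤ p) (hT : 0 < T) (hn : 3 ≤ n)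
    (hPsi : ∀ t : ℝ, t ≠ 0 → ‖Psi t‖ ≤ 1.0253 / (2 * π * |t|)) :
    (1 / T) * ∫ u in l..m, ‖Psi (u / T)‖ * u ^ p *
        Real.exp (-(u ^ 2 / 2) * (1 - 4 * chi1 / q * u - 1 / n))
      ≤ 1.0253 * 2 ^ (3 * p / 2 - 2) / π *
          (uGamma (p / 2) (l ^ 2 / 8) - uGamma (p / 2) (m ^ 2 / 8)) := by
  rcases eq_or_lt_of_le hlm with rfl | hlt
  · simp
  have hm0 : 0 < m := lt_of_le_of_lt hl hlt
  have hq0 : 0 < q := lt_of_lt_of_le hm0 hmq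
  have hπ : 0 < π := Real.pi_pos
  set C : ℝ := 1.0253 * T / (2 * π) with hC
  have hC0 : 0 < C := by positivity
  set f : ℝ → ℝ := fun u => ‖Psi (u / T)‖ * u ^ p *
      Real.exp (-(u ^ 2 / 2) * (1 - 4 * chi1 / q * u - 1 / n)) with hf
  set g : ℝ → ℝ := fun u => C * (u ^ (p - 1) * Real.exp (-(u ^ 2 / 8))) with hg
  have hbound : ∀ u ∈ Ioc l m, f u ≤ g u := by
    intro u hu
    have hu0 : 0 < u := lt_of_le_of_lt hl hu.1
    have hE : (1:ℝ)/4 ≤ 1 - 4 * chi1 / q * u - 1 / n := by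
      have hc0 : (0:ℝ) ≤ 4 * chi1 / q := div_nonneg (by linarith [chi1_nonneg]) hq0.le
      have h1 : 4 * chi1 / q * u ≤ 4 * chi1 := by
        have h := mul_le_mul_of_nonneg_left (le_trans hu.2 hmq) hc0
        rwa [div_mul_cancel₀ _ hq0.ne'] at h
      have h2 : chi1 ≤ 5/48 := chi1_le
      have h3 : (1:ℝ)/(n:ℝ) ≤ 1/3 := by
        apply one_div_le_one_div_of_le (by norm_num)
        exact_mod_cast hn
      linarith
    have hexp : Real.exp (-(u ^ 2 / 2) * (1 - 4 * chi1 / q * u - 1 / n))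
        ≤ Real.exp (-(u ^ 2 / 8)) := by
      apply Real.exp_le_exp.mpr
      nlinarith [sq_nonneg u]
    have hPsiu : ‖Psi (u / T)‖ ≤ C / u := by
      have h := hPsi (u / T) (by positivity)
      have habs : |u / T| = u / T := abs_of_pos (by positivity)
      rw [habs] at h
      refine h.trans (le_of_eq ?_)
      rw [hC]
      field_simp
    have hup : (0:ℝ) ≤ u ^ p := Real.rpow_nonneg hu0.le p
    calc f u = ‖Psi (u / T)‖ * u ^ p *
          Real.exp (-(u ^ 2 / 2) * (1 - 4 * chi1 / q * u - 1 / n)) := rfl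
      _ ≤ (C / u) * u ^ p * Real.exp (-(u ^ 2 / 8)) := by
          have h1 : ‖Psi (u / T)‖ * u ^ p ≤ (C / u) * u ^ p :=
            mul_le_mul_of_nonneg_right hPsiu hup
          exact mul_le_mul h1 hexp (Real.exp_pos _).le
            (mul_nonneg (div_nonneg hC0.le hu0.le) hup)
      _ = g u := by
          simp only [hg]
          have h9 : u ^ (p - 1) = u ^ p / u := by
            rw [Real.rpow_sub hu0, Real.rpow_one]
          rw [h9]
          field_simp
  have hrp : ∀ c : ℝ, AEMeasurable (fun u : ℝ => u ^ c) (volume.restrict (Ioc l m)) := by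
    intro c
    refine ContinuousOn.aemeasurable ?_ measurableSet_Ioc
    intro u hu
    exact (Real.continuousAt_rpow_const u c
      (Or.inl (ne_of_gt (lt_of_le_of_lt hl hu.1)))).continuousWithinAt
  have hfm : AEStronglyMeasurable f (volume.restrict (Ioc l m)) :=
    ((((measurable_Psi.comp (measurable_id.div_const T)).norm.aemeasurable).mul (hrp p)).mul
      (Continuous.measurable (by fun_prop : Continuous fun u : ℝ =>
        Real.exp (-(u ^ 2 / 2) * (1 - 4 * chi1 / q * u - 1 / n)))).aemeasurable).aestronglyMeasurable
  have hgm : AEStronglyMeasurable g (volume.restrict (Ioc l m)) :=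
    (aemeasurable_const.mul ((hrp (p - 1)).mul
      (Continuous.measurable (by fun_prop : Continuous fun u : ℝ =>
        Real.exp (-(u ^ 2 / 8)))).aemeasurable)).aestronglyMeasurable
  have hgK : ∀ u ∈ Ioc l m, g u ≤ C * m ^ (p - 1) := by
    intro u hu
    have hu0 : 0 < u := lt_of_le_of_lt hl hu.1
    have h1 : u ^ (p - 1) ≤ m ^ (p - 1) :=
      Real.rpow_le_rpow hu0.le hu.2 (by linarith)
    have h2 : Real.exp (-(u ^ 2 / 8)) ≤ 1 := Real.exp_le_one_iff.mpr (neg_nonpos.mpr (by positivity))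
    calc g u = C * (u ^ (p - 1) * Real.exp (-(u ^ 2 / 8))) := rfl
      _ ≤ C * (m ^ (p - 1) * 1) := by
          apply mul_le_mul_of_nonneg_left _ hC0.le
          exact mul_le_mul h1 h2 (Real.exp_pos _).le (Real.rpow_nonneg hm0.le _)
      _ = C * m ^ (p - 1) := by ring
  have hgi : IntegrableOn g (Ioc l m) := by
    refine ⟨hgm, HasFiniteIntegral.restrict_of_bounded (C := C * m ^ (p - 1))
      measure_Ioc_lt_top ?_⟩
    filter_upwards [ae_restrict_mem measurableSet_Ioc] with u hu
    rw [Real.norm_eq_abs, abs_of_nonneg]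
    · exact hgK u hu
    · have hu0 : 0 < u := lt_of_le_of_lt hl hu.1
      positivity
  have hfnn : ∀ u ∈ Ioc l m, 0 ≤ f u := by
    intro u hu
    have hu0 : 0 < u := lt_of_le_of_lt hl hu.1
    have h0 := Real.rpow_nonneg hu0.le p
    exact mul_nonneg (mul_nonneg (norm_nonneg _) h0) (Real.exp_pos _).le
  have hfi : IntegrableOn f (Ioc l m) := by
    apply hgi.mono' hfm
    filter_upwards [ae_restrict_mem measurableSet_Ioc] with u hu
    rw [Real.norm_eq_abs, abs_of_nonneg (hfnn u hu)]
    exact hbound u hu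
  have hmono := setIntegral_mono_on hfi hgi measurableSet_Ioc hbound
  have hgval : ∫ u in Ioc l m, g u
      = C * ∫ u in Ioc l m, u ^ (p - 1) * Real.exp (-(u ^ 2 / 8)) := by
    rw [hg, MeasureTheory.integral_const_mul]
  rw [intervalIntegral.integral_of_le hlm, key_subst hl hlm hp]
  set I := ∫ u in Ioc l m, u ^ (p - 1) * Real.exp (-(u ^ 2 / 8)) with hI
  have hchain : (1 / T) * ∫ u in Ioc l m, f u ≤ (1 / T) * (C * I) := by
    rw [← hgval]
    exact mul_le_mul_of_nonneg_left hmono (by positivity)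
  refine le_trans hchain (le_of_eq ?_)
  have h8 : (8:ℝ) ^ (-(p/2)) = (2:ℝ) ^ (-(3*p/2)) := by
    rw [show (8:ℝ) = (2:ℝ) ^ (3:ℝ) by
        rw [show (3:ℝ) = ((3:ℕ):ℝ) by norm_num, Real.rpow_natCast]; norm_num,
      ← Real.rpow_mul (by norm_num)]
    ring_nf
  have h2 : (2:ℝ) ^ (3*p/2 - 2) * (2:ℝ) ^ (-(3*p/2)) = (2:ℝ) ^ (-(2:ℝ)) := by
    rw [← Real.rpow_add (by norm_num : (0:ℝ) < 2)]
    congr 1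
    ring_nf
  have h3 : (2:ℝ) ^ (-(2:ℝ)) = 1/4 := by
    rw [Real.rpow_neg (by norm_num), show (2:ℝ)^(2:ℝ) = 4 by
      rw [show (2:ℝ) = ((2:ℕ):ℝ) by norm_num]; rw [Real.rpow_natCast]; norm_num]
    norm_num
  have hconst : 1.0253 * 2 ^ (3 * p / 2 - 2) / π * (2 * (8:ℝ) ^ (-(p/2)))
      = 1.0253 / (2 * π) := by
    rw [h8, show 1.0253 * 2 ^ (3 * p / 2 - 2) / π * (2 * (2:ℝ) ^ (-(3*p/2)))
      = 1.0253 / π * ((2:ℝ) ^ (3 * p / 2 - 2) * (2:ℝ) ^ (-(3*p/2))) * 2 by ring, h2, h3]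
    ring
  have hTC : (1 / T) * C = 1.0253 / (2 * π) := by
    rw [hC]; field_simp
  calc (1 / T) * (C * I) = ((1 / T) * C) * I := by ring
    _ = (1.0253 * 2 ^ (3 * p / 2 - 2) / π * (2 * (8:ℝ) ^ (-(p/2)))) * I := by
        rw [hTC, hconst]
    _ = 1.0253 * 2 ^ (3 * p / 2 - 2) / π * (2 * (8:ℝ) ^ (-(p/2)) * I) := by ring
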